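/- Suppose v: (0,∞) × (μ,∞) × (0,∞) → ℝ satisfies the dynamic programming inequality v(x,y,s) ≤ t + v(Σ_a(t), Λ_a(t), t+s) for every constant control a ∈ [0,1] and small t > 0, where (Σ_a, Λ_a) is the SIR flow from (x,y) with constant control a. If v - φ attains a local maximum at (x₀,y₀,t₀) for a C¹ function φ, then -∂_t φ + β(t₀)x₀y₀ ∂_x φ + x₀(∂_x φ)_+ + (γ(t₀) - β(t₀)x₀) y₀ ∂_y φ ≤ 1 at (x₀,y₀,t₀). -/

import Mathlib

lemma key_right_deriv_nonneg (g : ℝ → ℝ) (d : ℝ) (hg : HasDerivAt g d 0)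
    (ε : ℝ) (hε : 0 < ε) (h : ∀ t ∈ Set.Ioo (0:ℝ) ε, g 0 ≤ g t) : 0 ≤ d := by
  have hs : Filter.Tendsto (slope g 0) (nhdsWithin 0 {(0:ℝ)}ᶜ) (nhds d) :=
    hasDerivAt_iff_tendsto_slope.mp hg
  have hle : nhdsWithin (0:ℝ) (Set.Ioi 0) ≤ nhdsWithin 0 {(0:ℝ)}ᶜ := by
    apply nhdsWithin_mono
    intro t ht
    exact ne_of_gt ht
  have hs' : Filter.Tendsto (slope g 0) (nhdsWithin 0 (Set.Ioi 0)) (nhds d) :=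
    hs.mono_left hle
  refine ge_of_tendsto hs' ?_
  filter_upwards [Ioo_mem_nhdsGT_of_mem (by simp [hε] : (0:ℝ) ∈ Set.Ico 0 ε)] with t ht
  have ht0 : 0 < t := ht.1
  have := h t ht
  rw [slope_def_field]
  have h1 : 0 ≤ g t - g 0 := by linarith
  have := div_nonneg h1 ht0.le
  simpa [div_eq_mul_inv, sub_div] using this

/-- The viscosity subsolution property follows from the dynamic
programming inequality. Points are written `(x, y, s)`. -/
theorem sir_dpp_implies_viscosity_subsolution
    (β γ : ℝ → ℝ) (β₁ β₂ γ₁ γ₂ μ : ℝ)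
    (hβ₁ : 0 < β₁) (hβ₁₂ : β₁ ≤ β₂) (hγ₁ : 0 < γ₁) (hγ₁₂ : γ₁ ≤ γ₂)
    (hβc : Continuous β) (hγc : Continuous γ)
    (hβ : ∀ s ≥ (0:ℝ), β s ∈ Set.Icc β₁ β₂)
    (hγ : ∀ s ≥ (0:ℝ), γ s ∈ Set.Icc γ₁ γ₂) (hμ : 0 < μ)
    (v : ℝ × ℝ × ℝ → ℝ)
    -- dynamic programming inequality along constant-control SIR flows
    (hDPP : ∀ a ∈ Set.Icc (0:ℝ) 1, ∀ x > (0:ℝ), ∀ y > μ, ∀ s > (0:ℝ),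
      ∃ Sg Lm : ℝ → ℝ, Sg 0 = x ∧ Lm 0 = y ∧
        (∀ r ∈ Set.Ici (0:ℝ),
          HasDerivAt Sg (-(β (s + r)) * Sg r * Lm r - a * Sg r) r) ∧
        (∀ r ∈ Set.Ici (0:ℝ),
          HasDerivAt Lm (β (s + r) * Sg r * Lm r - γ (s + r) * Lm r) r) ∧
        ∃ ε > (0:ℝ), ∀ t ∈ Set.Ioo (0:ℝ) ε, v (x, y, s) ≤ t + v (Sg t, Lm t, t + s))
    (φ : ℝ × ℝ × ℝ → ℝ) (hφ : ContDiff ℝ 1 φ)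
    (x₀ y₀ t₀ : ℝ) (hx₀ : 0 < x₀) (hy₀ : μ < y₀) (ht₀ : 0 < t₀)
    (hmax : IsLocalMax (fun p => v p - φ p) (x₀, y₀, t₀)) :
    -(fderiv ℝ φ (x₀, y₀, t₀) (0, 0, 1)) +
        β t₀ * x₀ * y₀ * fderiv ℝ φ (x₀, y₀, t₀) (1, 0, 0) +
        x₀ * max (fderiv ℝ φ (x₀, y₀, t₀) (1, 0, 0)) 0 +
        (γ t₀ - β t₀ * x₀) * y₀ * fderiv ℝ φ (x₀, y₀, t₀) (0, 1, 0) ≤ 1 := by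
  set L := fderiv ℝ φ (x₀, y₀, t₀) with hL
  set A := L (1, 0, 0) with hA
  set B := L (0, 1, 0) with hB
  set C := L (0, 0, 1) with hC
  have hφd : HasFDerivAt φ L (x₀, y₀, t₀) :=
    (hφ.differentiable one_ne_zero (x₀, y₀, t₀)).hasFDerivAt
  -- the key claim for each constant control a ∈ [0,1]
  have claim : ∀ a ∈ Set.Icc (0:ℝ) 1,
      0 ≤ 1 + (-(β t₀) * x₀ * y₀ - a * x₀) * A + (β t₀ * x₀ * y₀ - γ t₀ * y₀) * B + C := by
    intro a ha
    obtain ⟨Sg, Lm, hS0, hL0, hSd, hLd, ε, hε, hdpp⟩ :=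
      hDPP a ha x₀ hx₀ y₀ hy₀ t₀ ht₀
    -- derivatives of the curves at 0
    have hSd0 : HasDerivAt Sg (-(β t₀) * x₀ * y₀ - a * x₀) 0 := by
      have := hSd 0 Set.self_mem_Ici
      simpa [hS0, hL0] using this
    have hLd0 : HasDerivAt Lm (β t₀ * x₀ * y₀ - γ t₀ * y₀) 0 := by
      have := hLd 0 Set.self_mem_Ici
      simpa [hS0, hL0] using this
    -- the curve  c t = (Sg t, Lm t, t + t₀)
    set c : ℝ → ℝ × ℝ × ℝ := fun t => (Sg t, Lm t, t + t₀) with hc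
    have hc0 : c 0 = (x₀, y₀, t₀) := by simp [hc, hS0, hL0]
    have hcd : HasDerivAt c
        (-(β t₀) * x₀ * y₀ - a * x₀, β t₀ * x₀ * y₀ - γ t₀ * y₀, (1:ℝ)) 0 :=
      hSd0.prodMk (hLd0.prodMk ((hasDerivAt_id 0).add_const t₀))
    -- g t = t + φ (c t)
    set g : ℝ → ℝ := fun t => t + φ (c t) with hgdef
    have hφc : HasDerivAt (fun t => φ (c t))
        (L (-(β t₀) * x₀ * y₀ - a * x₀, β t₀ * x₀ * y₀ - γ t₀ * y₀, (1:ℝ))) 0 := by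
      have hφd' : HasFDerivAt φ L (c 0) := hc0 ▸ hφd
      exact hφd'.comp_hasDerivAt 0 hcd
    have hgd : HasDerivAt g
        (1 + L (-(β t₀) * x₀ * y₀ - a * x₀, β t₀ * x₀ * y₀ - γ t₀ * y₀, (1:ℝ))) 0 := by
      simpa [hgdef, Pi.add_def] using (hasDerivAt_id' (x := (0:ℝ))).add hφc
    -- eventually (v - φ)(c t) ≤ (v - φ)(x₀,y₀,t₀) near 0
    have hcont : Filter.Tendsto c (nhds 0) (nhds (x₀, y₀, t₀)) := by
      simpa [hc0] using hcd.continuousAt.tendsto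
    have hev : ∀ᶠ t in nhds (0:ℝ),
        v (c t) - φ (c t) ≤ v (x₀, y₀, t₀) - φ (x₀, y₀, t₀) := hcont.eventually hmax
    obtain ⟨δ, hδ, hδ'⟩ := Metric.eventually_nhds_iff.mp hev
    -- on (0, min ε δ) we have g 0 ≤ g t
    have hglb : ∀ t ∈ Set.Ioo (0:ℝ) (min ε δ), g 0 ≤ g t := by
      intro t ht
      have ht1 : t ∈ Set.Ioo 0 ε := ⟨ht.1, lt_of_lt_of_le ht.2 (min_le_left _ _)⟩
      have ht2 : dist t (0:ℝ) < δ := by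
        rw [Real.dist_eq, sub_zero, abs_of_pos ht.1]
        exact lt_of_lt_of_le ht.2 (min_le_right _ _)
      have h1 := hdpp t ht1
      have h2 := hδ' ht2
      have hg0 : g 0 = φ (x₀, y₀, t₀) := by simp [hgdef, hc0]
      have hgt : g t = t + φ (c t) := rfl
      have hvc : v (c t) = v (Sg t, Lm t, t + t₀) := rfl
      rw [hg0, hgt]
      have : v (x₀, y₀, t₀) ≤ t + v (c t) := by simpa [hc] using h1
      linarith
    have hd := key_right_deriv_nonneg g _ hgd (min ε δ) (lt_min hε hδ) hglb
    -- expand L by linearity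
    have hlin : L (-(β t₀) * x₀ * y₀ - a * x₀, β t₀ * x₀ * y₀ - γ t₀ * y₀, (1:ℝ))
        = (-(β t₀) * x₀ * y₀ - a * x₀) * A + (β t₀ * x₀ * y₀ - γ t₀ * y₀) * B + C := by
      have hvec : ((-(β t₀) * x₀ * y₀ - a * x₀, β t₀ * x₀ * y₀ - γ t₀ * y₀, (1:ℝ)) : ℝ × ℝ × ℝ)
          = (-(β t₀) * x₀ * y₀ - a * x₀) • ((1:ℝ), (0:ℝ), (0:ℝ))
            + (β t₀ * x₀ * y₀ - γ t₀ * y₀) • ((0:ℝ), (1:ℝ), (0:ℝ))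
            + (1:ℝ) • ((0:ℝ), (0:ℝ), (1:ℝ)) := by
        simp [Prod.ext_iff]
      rw [hvec, map_add, map_add, map_smul, map_smul, map_smul]
      simp only [smul_eq_mul, ← hA, ← hB, ← hC]
      try ring
      try simp [smul_eq_mul]
    rw [hlin] at hd
    linarith
  have h0 := claim 0 ⟨le_refl 0, zero_le_one⟩
  have h1 := claim 1 ⟨zero_le_one, le_refl 1⟩
  rcases le_or_gt A 0 with hAle | hAgt
  · rw [max_eq_right hAle]
    nlinarith
  · rw [max_eq_left hAgt.le]
    nlinarith
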